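/- Model-free RTA invariance (scalar ODE version): let γ_p < λ, σ > 0, and suppose h_p, V : ℝ → ℝ are continuously differentiable with V(t) ≥ 0, V'(t) ≤ -λ·V(t), and h_p'(t) ≥ -γ_p·h_p(t) + σ·p(t)² - p(t)·√(2·V(t)) for all t ≥ 0, where p(t) ≥ 0. Then h_V(t) := h_p(t) - V(t)/(2σ(λ-γ_p)) satisfies h_V'(t) ≥ -γ_p·h_V(t) for all t ≥ 0; combined with h_V(0) ≥ 0 this gives h_V(t) ≥ 0 and h_p(t) ≥ 0 for all t ≥ 0. -/

import Mathlib

theorem stmt_12 (γp lam σ : ℝ) (h1 : 0 < γp) (h2 : γp < lam) (hσ : 0 < σ)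
    (hp V p : ℝ → ℝ) (hhp : ContDiff ℝ 1 hp) (hVd : ContDiff ℝ 1 V)
    (hVnn : ∀ t ≥ (0:ℝ), 0 ≤ V t) (hpnn : ∀ t ≥ (0:ℝ), 0 ≤ p t)
    (hVdec : ∀ t ≥ (0:ℝ), deriv V t ≤ -lam * V t)
    (hhpcond : ∀ t ≥ (0:ℝ),
      deriv hp t ≥ -γp * hp t + σ * (p t)^2 - (p t) * Real.sqrt (2 * V t))
    (hV0 : 0 ≤ hp 0 - V 0 / (2*σ*(lam - γp))) :
    ∀ t ≥ (0:ℝ), 0 ≤ hp t := by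
  have hc : 0 < 2*σ*(lam - γp) := by nlinarith
  set c : ℝ := 2*σ*(lam - γp) with hc_def
  have hdhp : Differentiable ℝ hp := hhp.differentiable one_ne_zero
  have hdV : Differentiable ℝ V := hVd.differentiable one_ne_zero
  set f : ℝ → ℝ := fun t => (hp t - V t / c) * Real.exp (γp * t) with hf_def
  have hfderiv : ∀ t : ℝ, HasDerivAt f
      ((deriv hp t - deriv V t / c) * Real.exp (γp * t)
        + (hp t - V t / c) * (Real.exp (γp * t) * γp)) t := by
    intro t
    have h1' : HasDerivAt (fun t => hp t - V t / c)
        (deriv hp t - deriv V t / c) t :=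
      (hdhp t).hasDerivAt.sub ((hdV t).hasDerivAt.div_const c)
    have h2' : HasDerivAt (fun t => Real.exp (γp * t))
        (Real.exp (γp * t) * γp) t := by
      simpa using (((hasDerivAt_id t).const_mul γp).exp)
    exact h1'.mul h2'
  have hdf : Differentiable ℝ f := fun t => (hfderiv t).differentiableAt
  have hderiv_nonneg : ∀ t ≥ (0:ℝ), 0 ≤ deriv f t := by
    intro t ht
    rw [(hfderiv t).deriv]
    have hexp : 0 < Real.exp (γp * t) := Real.exp_pos _
    have e3 : V t / (2*σ) * (2*σ) = V t := div_mul_cancel₀ _ (by positivity)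
    -- key inequality
    have hamgm : σ * (p t)^2 - (p t) * Real.sqrt (2 * V t) ≥ - (V t / (2*σ)) := by
      have hs : Real.sqrt (2 * V t) ^ 2 = 2 * V t :=
        Real.sq_sqrt (by linarith [hVnn t ht])
      nlinarith [sq_nonneg (σ * p t - Real.sqrt (2 * V t) / 2), hσ, e3,
        mul_pos hσ hσ]
    have hhp' : deriv hp t ≥ -γp * hp t - V t / (2*σ) := by
      have := hhpcond t ht
      linarith
    have hV' : deriv V t ≤ -lam * V t := hVdec t ht
    have hBA : deriv V t / c ≤ (-lam * V t) / c :=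
      by
      exact (div_le_div_iff_of_pos_right hc).mpr hV'
    have hAeq : (lam - γp) * (V t / c) = V t / (2*σ) := by
      have hσ0 : σ ≠ 0 := hσ.ne'
      have hlg : lam - γp ≠ 0 := by linarith
      rw [hc_def]; field_simp
    have key : 0 ≤ deriv hp t - deriv V t / c + γp * (hp t - V t / c) := by
      have h4 : (-lam * V t) / c = -(lam * (V t / c)) := by ring
      rw [h4] at hBA
      have h5 : lam * (V t / c) = γp * (V t / c) + V t / (2*σ) := by
        linarith [hAeq]
      linarith [hhp', hBA]
    nlinarith [mul_nonneg key hexp.le]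
  have hmono : MonotoneOn f (Set.Ici (0:ℝ)) := by
    apply monotoneOn_of_deriv_nonneg (convex_Ici 0) hdf.continuous.continuousOn
      (hdf.differentiableOn)
    intro x hx
    rw [interior_Ici] at hx
    exact hderiv_nonneg x (le_of_lt hx)
  intro t ht
  have hf0 : 0 ≤ f 0 := by
    simp only [hf_def, mul_zero, Real.exp_zero, mul_one]
    exact hV0
  have hft : f 0 ≤ f t := hmono (Set.self_mem_Ici) ht ht
  have hexp : 0 < Real.exp (γp * t) := Real.exp_pos _
  have hfnn : 0 ≤ (hp t - V t / c) := by
    have hmul : 0 ≤ (hp t - V t / c) * Real.exp (γp * t) := le_trans hf0 hft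
    by_contra h
    push_neg at h
    nlinarith [mul_pos (neg_pos.2 h) hexp]
  have : 0 ≤ V t / c := div_nonneg (hVnn t ht) hc.le
  linarith
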